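/- The cell-centered Hartley matrix H(n) is orthogonal up to the factor n: H(n)·H(n)ᵀ = H(n)ᵀ·H(n) = n·I_n. -/

import Mathlib

open Matrix Real Finset Complex


-- w := exp((2πm/n) I) is ≠ 1 when n ∤ m
lemma exp_ne_one (n : ℕ) (hn : 1 ≤ n) (m : ℤ) (hm : ¬ (n:ℤ) ∣ m) :
    Complex.exp ((2 * Real.pi * m / n) * Complex.I) ≠ 1 := by
  intro h
  rw [Complex.exp_eq_one_iff] at h
  obtain ⟨t, ht⟩ := h
  apply hm
  refine ⟨t, ?_⟩
  have hn0 : (n:ℂ) ≠ 0 := Nat.cast_ne_zero.mpr (by omega)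
  have hπ : (Real.pi:ℂ) ≠ 0 := Complex.ofReal_ne_zero.mpr Real.pi_ne_zero
  have h2 : (2 * (Real.pi:ℂ) * Complex.I) * (m:ℂ) = (2 * (Real.pi:ℂ) * Complex.I) * ((n:ℂ) * t) := by
    field_simp at ht
    linear_combination (2 * (Real.pi:ℂ) * Complex.I) * ht
  have := mul_left_cancel₀ (by simp [hπ, Complex.I_ne_zero] : (2 * (Real.pi:ℂ) * Complex.I) ≠ 0) h2
  exact_mod_cast this

lemma sum_exp_A (n : ℕ) (hn : 1 ≤ n) (m : ℤ) (hm : ¬ (n:ℤ) ∣ m) :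
    ∑ k ∈ range n, Complex.exp (((2 * Real.pi * m * k / n : ℝ)) * Complex.I) = 0 := by
  have hn0 : (n:ℂ) ≠ 0 := Nat.cast_ne_zero.mpr (by omega)
  have hterm : ∀ k : ℕ, Complex.exp (((2 * Real.pi * m * k / n : ℝ)) * Complex.I)
      = Complex.exp ((2 * Real.pi * m / n) * Complex.I) ^ k := by
    intro k
    rw [← Complex.exp_nat_mul]
    congr 1
    push_cast
    ring
  simp_rw [hterm]
  rw [geom_sum_eq (exp_ne_one n hn m hm)]
  rw [← Complex.exp_nat_mul]
  have : (n:ℂ) * ((2 * Real.pi * m / n) * Complex.I) = (m:ℂ) * (2 * Real.pi * Complex.I) := by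
    field_simp
  rw [this, Complex.exp_int_mul_two_pi_mul_I]
  simp

lemma sum_exp_B (n : ℕ) (hn : 1 ≤ n) (c : ℤ) (hc : ¬ (n:ℤ) ∣ c) :
    ∑ j ∈ range n, Complex.exp (((2 * j + 1) * c * Real.pi / n : ℝ) * Complex.I) = 0 := by
  have hn0 : (n:ℂ) ≠ 0 := Nat.cast_ne_zero.mpr (by omega)
  have hterm : ∀ j : ℕ, Complex.exp (((2 * j + 1) * c * Real.pi / n : ℝ) * Complex.I)
      = Complex.exp ((c * Real.pi / n) * Complex.I) *
        Complex.exp ((2 * Real.pi * c / n) * Complex.I) ^ j := by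
    intro j
    rw [← Complex.exp_nat_mul, ← Complex.exp_add]
    congr 1
    push_cast
    ring
  simp_rw [hterm, ← Finset.mul_sum]
  rw [geom_sum_eq (exp_ne_one n hn c hc)]
  rw [← Complex.exp_nat_mul]
  have : (n:ℂ) * ((2 * Real.pi * c / n) * Complex.I) = (c:ℂ) * (2 * Real.pi * Complex.I) := by
    field_simp
  rw [this, Complex.exp_int_mul_two_pi_mul_I]
  simp

lemma sum_cos_A (n : ℕ) (hn : 1 ≤ n) (m : ℤ) :
    ∑ k ∈ range n, Real.cos (2 * Real.pi * m * k / n) =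
      if (n:ℤ) ∣ m then (n:ℝ) else 0 := by
  by_cases h : (n:ℤ) ∣ m
  · rw [if_pos h]
    obtain ⟨t, ht⟩ := h
    have hn0 : (n:ℝ) ≠ 0 := Nat.cast_ne_zero.mpr (by omega)
    have : ∀ k ∈ range n, Real.cos (2 * Real.pi * m * k / n) = 1 := by
      intro k _
      have harg : (2 * Real.pi * m * k / n : ℝ) = ((t * k : ℤ) : ℝ) * (2 * Real.pi) := by
        subst ht; push_cast; field_simp
      rw [harg, Real.cos_int_mul_two_pi]
    rw [Finset.sum_congr rfl this]
    simp
  · rw [if_neg h]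
    have := congrArg Complex.re (sum_exp_A n hn m h)
    rw [Complex.re_sum] at this
    simp only [Complex.exp_ofReal_mul_I_re] at this
    simpa using this

lemma sum_sin_A (n : ℕ) (hn : 1 ≤ n) (m : ℤ) :
    ∑ k ∈ range n, Real.sin (2 * Real.pi * m * k / n) = 0 := by
  by_cases h : (n:ℤ) ∣ m
  · obtain ⟨t, ht⟩ := h
    have hn0 : (n:ℝ) ≠ 0 := Nat.cast_ne_zero.mpr (by omega)
    have : ∀ k ∈ range n, Real.sin (2 * Real.pi * m * k / n) = 0 := by
      intro k _
      have harg : (2 * Real.pi * m * k / n : ℝ) = ((2 * t * k : ℤ) : ℝ) * Real.pi := by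
        subst ht; push_cast; field_simp
      rw [harg, Real.sin_int_mul_pi]
    rw [Finset.sum_congr rfl this]
    simp
  · have := congrArg Complex.im (sum_exp_A n hn m h)
    rw [Complex.im_sum] at this
    simp only [Complex.exp_ofReal_mul_I_im] at this
    simpa using this

lemma sum_cos_B (n : ℕ) (hn : 1 ≤ n) (c : ℤ) (hc : ¬ (n:ℤ) ∣ c) :
    ∑ j ∈ range n, Real.cos ((2 * j + 1) * c * Real.pi / n) = 0 := by
  have := congrArg Complex.re (sum_exp_B n hn c hc)
  rw [Complex.re_sum] at this
  simp only [Complex.exp_ofReal_mul_I_re] at this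
  simpa using this

lemma sum_sin_B (n : ℕ) (hn : 1 ≤ n) (s : ℤ) :
    ∑ j ∈ range n, Real.sin ((2 * j + 1) * s * Real.pi / n) = 0 := by
  by_cases h : (n:ℤ) ∣ s
  · obtain ⟨t, ht⟩ := h
    have hn0 : (n:ℝ) ≠ 0 := Nat.cast_ne_zero.mpr (by omega)
    have : ∀ j ∈ range n, Real.sin ((2 * j + 1) * s * Real.pi / n) = 0 := by
      intro j _
      have harg : ((2 * j + 1) * s * Real.pi / n : ℝ) = (((2 * j + 1) * t : ℤ) : ℝ) * Real.pi := by
        subst ht; push_cast; field_simp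
      rw [harg, Real.sin_int_mul_pi]
    rw [Finset.sum_congr rfl this]
    simp
  · have := congrArg Complex.im (sum_exp_B n hn s h)
    rw [Complex.im_sum] at this
    simp only [Complex.exp_ofReal_mul_I_im] at this
    simpa using this

lemma cas_mul (x y : ℝ) :
    (Real.cos x + Real.sin x) * (Real.cos y + Real.sin y) =
      Real.cos (x - y) + Real.sin (x + y) := by
  rw [Real.cos_sub, Real.sin_add]; ring

lemma dvd_iff_eq (n : ℕ) (j j' : Fin n) : (n:ℤ) ∣ ((j:ℤ) - (j':ℤ)) ↔ j = j' := by
  constructor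
  · rintro ⟨t, ht⟩
    have h1 : (j:ℤ) < n := by exact_mod_cast j.isLt
    have h2 : (j':ℤ) < n := by exact_mod_cast j'.isLt
    have h3 : 0 ≤ (j:ℤ) := by positivity
    have h4 : 0 ≤ (j':ℤ) := by positivity
    have hn0 : (0:ℤ) < n := by omega
    have hb1 : (n:ℤ) * t < n * 1 := by nlinarith
    have hb2 : (n:ℤ) * (-1) < n * t := by nlinarith
    have ht1 : t < 1 := lt_of_mul_lt_mul_left hb1 (le_of_lt hn0)
    have ht2 : (-1:ℤ) < t := lt_of_mul_lt_mul_left hb2 (le_of_lt hn0)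
    have ht0 : t = 0 := by omega
    have : (j:ℤ) = (j':ℤ) := by subst ht0; simp at ht; omega
    exact Fin.ext (by exact_mod_cast this)
  · rintro rfl; simp




/-- The cell-centered Hartley matrix `H(n)` with entries
`H(n)_{j,k} = cos(2(j+1/2)kπ/n) + sin(2(j+1/2)kπ/n)`. -/
noncomputable def hartley (n : ℕ) : Matrix (Fin n) (Fin n) ℝ :=
  fun j k =>
    Real.cos (2 * ((j.val : ℝ) + 1/2) * (k.val : ℝ) * Real.pi / n) +
    Real.sin (2 * ((j.val : ℝ) + 1/2) * (k.val : ℝ) * Real.pi / n)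

lemma entry1 (n : ℕ) (hn : 1 ≤ n) (j j' : Fin n) :
    ∑ k : Fin n, hartley n j k * hartley n j' k = if j = j' then (n:ℝ) else 0 := by
  have step : ∀ k : ℕ,
      (Real.cos (2 * ((j.val:ℝ) + 1/2) * (k:ℝ) * Real.pi / n) +
        Real.sin (2 * ((j.val:ℝ) + 1/2) * (k:ℝ) * Real.pi / n)) *
      (Real.cos (2 * ((j'.val:ℝ) + 1/2) * (k:ℝ) * Real.pi / n) +
        Real.sin (2 * ((j'.val:ℝ) + 1/2) * (k:ℝ) * Real.pi / n))
      = Real.cos (2 * Real.pi * ((((j:ℤ) - (j':ℤ)):ℤ):ℝ) * k / n)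
        + Real.sin (2 * Real.pi * ((((j:ℤ) + (j':ℤ) + 1):ℤ):ℝ) * k / n) := by
    intro k
    rw [cas_mul]
    congr 1
    · congr 1; push_cast; ring
    · congr 1; push_cast; ring
  calc ∑ k : Fin n, hartley n j k * hartley n j' k
      = ∑ k ∈ Finset.range n, (Real.cos (2 * Real.pi * ((((j:ℤ) - (j':ℤ)):ℤ):ℝ) * k / n)
        + Real.sin (2 * Real.pi * ((((j:ℤ) + (j':ℤ) + 1):ℤ):ℝ) * k / n)) := by
        rw [← Fin.sum_univ_eq_sum_range]
        exact Finset.sum_congr rfl fun k _ => step k.val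
    _ = _ := by
        rw [Finset.sum_add_distrib, sum_cos_A n hn _, sum_sin_A n hn _, add_zero]
        simp only [dvd_iff_eq]

lemma entry2 (n : ℕ) (hn : 1 ≤ n) (k k' : Fin n) :
    ∑ j : Fin n, hartley n j k * hartley n j k' = if k = k' then (n:ℝ) else 0 := by
  by_cases hkk : k = k'
  · subst hkk
    rw [if_pos rfl]
    have step : ∀ j : ℕ,
        (Real.cos (2 * ((j:ℝ) + 1/2) * (k.val:ℝ) * Real.pi / n) +
          Real.sin (2 * ((j:ℝ) + 1/2) * (k.val:ℝ) * Real.pi / n)) *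
        (Real.cos (2 * ((j:ℝ) + 1/2) * (k.val:ℝ) * Real.pi / n) +
          Real.sin (2 * ((j:ℝ) + 1/2) * (k.val:ℝ) * Real.pi / n))
        = 1 + Real.sin ((2 * (j:ℝ) + 1) * (((2 * (k:ℤ)):ℤ):ℝ) * Real.pi / n) := by
      intro j
      rw [cas_mul, sub_self, Real.cos_zero]
      congr 1
      congr 1
      push_cast; ring
    calc ∑ j : Fin n, hartley n j k * hartley n j k
        = ∑ j ∈ Finset.range n,
            (1 + Real.sin ((2 * (j:ℝ) + 1) * (((2 * (k:ℤ)):ℤ):ℝ) * Real.pi / n)) := by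
          rw [← Fin.sum_univ_eq_sum_range]
          exact Finset.sum_congr rfl fun j _ => step j.val
      _ = (n:ℝ) := by
          rw [Finset.sum_add_distrib, sum_sin_B n hn _, add_zero, Finset.sum_const,
            Finset.card_range, nsmul_eq_mul, mul_one]
  · rw [if_neg hkk]
    have hc : ¬ (n:ℤ) ∣ ((k:ℤ) - (k':ℤ)) := fun h => hkk ((dvd_iff_eq n k k').mp h)
    have step : ∀ j : ℕ,
        (Real.cos (2 * ((j:ℝ) + 1/2) * (k.val:ℝ) * Real.pi / n) +
          Real.sin (2 * ((j:ℝ) + 1/2) * (k.val:ℝ) * Real.pi / n)) *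
        (Real.cos (2 * ((j:ℝ) + 1/2) * (k'.val:ℝ) * Real.pi / n) +
          Real.sin (2 * ((j:ℝ) + 1/2) * (k'.val:ℝ) * Real.pi / n))
        = Real.cos ((2 * (j:ℝ) + 1) * ((((k:ℤ) - (k':ℤ)):ℤ):ℝ) * Real.pi / n)
          + Real.sin ((2 * (j:ℝ) + 1) * ((((k:ℤ) + (k':ℤ)):ℤ):ℝ) * Real.pi / n) := by
      intro j
      rw [cas_mul]
      congr 1
      · congr 1; push_cast; ring
      · congr 1; push_cast; ring
    calc ∑ j : Fin n, hartley n j k * hartley n j k'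
        = ∑ j ∈ Finset.range n,
            (Real.cos ((2 * (j:ℝ) + 1) * ((((k:ℤ) - (k':ℤ)):ℤ):ℝ) * Real.pi / n)
            + Real.sin ((2 * (j:ℝ) + 1) * ((((k:ℤ) + (k':ℤ)):ℤ):ℝ) * Real.pi / n)) := by
          rw [← Fin.sum_univ_eq_sum_range]
          exact Finset.sum_congr rfl fun j _ => step j.val
      _ = 0 := by
          rw [Finset.sum_add_distrib, sum_cos_B n hn _ hc, sum_sin_B n hn _, add_zero]

/-- The cell-centered Hartley matrix is orthogonal up to the factor `n`:
`H(n)·H(n)ᵀ = H(n)ᵀ·H(n) = n·I_n`. -/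
theorem hartley_orthogonal (n : ℕ) (hn : 1 ≤ n) :
    hartley n * (hartley n)ᵀ = (n : ℝ) • (1 : Matrix (Fin n) (Fin n) ℝ) ∧
    (hartley n)ᵀ * hartley n = (n : ℝ) • (1 : Matrix (Fin n) (Fin n) ℝ) := by
  refine ⟨?_, ?_⟩
  · ext j j'
    rw [Matrix.mul_apply]
    simp only [Matrix.transpose_apply, Matrix.smul_apply, Matrix.one_apply, smul_eq_mul,
      mul_ite, mul_one, mul_zero]
    exact entry1 n hn j j'
  · ext k k'
    rw [Matrix.mul_apply]
    simp only [Matrix.transpose_apply, Matrix.smul_apply, Matrix.one_apply, smul_eq_mul,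
      mul_ite, mul_one, mul_zero]
    exact entry2 n hn k k'
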